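/- Let ν be an l-dimensional linear subspace of ℝⁿ, let d > 0, let z ∈ ν with z ≠ 0, and let η ∈ ℝⁿ with ‖η‖ < d‖z‖ (Euclidean norms). Then there exists an l-dimensional linear subspace ν' of ℝⁿ such that z + η ∈ ν' and ‖P_ν − P_{ν'}‖ < d. -/

import Mathlib

noncomputable section

open Submodule RealInnerProductSpace

/-- The orthogonal projection onto `ν`, as a continuous linear map `ℝⁿ → ℝⁿ`. -/
def projCLM {n : ℕ} (ν : Submodule ℝ (EuclideanSpace ℝ (Fin n))) :
    EuclideanSpace ℝ (Fin n) →L[ℝ] EuclideanSpace ℝ (Fin n) :=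
  ν.subtypeL.comp (ν.orthogonalProjectionOnto)

lemma finrank_sup_span_aux {n : ℕ} (A : Submodule ℝ (EuclideanSpace ℝ (Fin n)))
    (x : EuclideanSpace ℝ (Fin n)) (hx : x ∉ A) :
    Module.finrank ℝ ((A ⊔ (ℝ ∙ x)) : Submodule ℝ (EuclideanSpace ℝ (Fin n)))
      = Module.finrank ℝ A + 1 := by
  have hx0 : x ≠ 0 := fun h => hx (h ▸ A.zero_mem)
  have hdisj : A ⊓ (ℝ ∙ x) = ⊥ := by
    rw [eq_bot_iff]
    rintro y ⟨hyA, hyx⟩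
    rcases Submodule.mem_span_singleton.1 hyx with ⟨c, rfl⟩
    rcases eq_or_ne c 0 with rfl | hc
    · simp
    · exact absurd (by simpa [smul_smul, inv_mul_cancel₀ hc] using A.smul_mem c⁻¹ hyA) hx
  have h := Submodule.finrank_sup_add_finrank_inf_eq A (ℝ ∙ x)
  rw [hdisj, finrank_bot, finrank_span_singleton hx0] at h
  omega

/-- Key geometric lemma: rotating a subspace inside the plane spanned by a unit vector
`u` in it and a unit vector `v` orthogonal to it, by an angle with sine `s`, moves the
orthogonal projection by at most `|s|` in operator norm. -/
lemma key_rotate {n : ℕ} (ν : Submodule ℝ (EuclideanSpace ℝ (Fin n)))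
    (u v : EuclideanSpace ℝ (Fin n)) (hu : u ∈ ν) (hv : v ∈ νᗮ)
    (hu1 : ‖u‖ = 1) (hv1 : ‖v‖ = 1) (c s : ℝ) (hcs : c ^ 2 + s ^ 2 = 1) :
    ∃ ν' : Submodule ℝ (EuclideanSpace ℝ (Fin n)),
      Module.finrank ℝ ν' = Module.finrank ℝ ν ∧ c • u + s • v ∈ ν' ∧
      ‖projCLM ν - projCLM ν'‖ ≤ |s| := by
  have huv : ⟪u, v⟫ = 0 := Submodule.inner_right_of_mem_orthogonal hu hv
  have hvu : ⟪v, u⟫ = 0 := by rw [real_inner_comm]; exact huv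
  have huu : ⟪u, u⟫ = 1 := by rw [real_inner_self_eq_norm_sq, hu1]; norm_num
  have hvv : ⟪v, v⟫ = 1 := by rw [real_inner_self_eq_norm_sq, hv1]; norm_num
  set u' : EuclideanSpace ℝ (Fin n) := c • u + s • v with hu'def
  have hu'u' : ⟪u', u'⟫ = 1 := by
    simp only [hu'def, inner_add_left, inner_add_right, real_inner_smul_left,
      real_inner_smul_right, huu, hvv, huv, hvu]
    nlinarith
  set ν₀ : Submodule ℝ (EuclideanSpace ℝ (Fin n)) := ν ⊓ (ℝ ∙ u)ᗮ with hν₀def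
  have hν₀ν : ν₀ ≤ ν := inf_le_left
  have hinner₀ : ∀ y ∈ ν₀, ⟪u, y⟫ = 0 ∧ ⟪v, y⟫ = 0 := by
    intro y hy
    refine ⟨Submodule.mem_orthogonal_singleton_iff_inner_right.1 hy.2, ?_⟩
    rw [real_inner_comm]
    exact Submodule.inner_right_of_mem_orthogonal (hν₀ν hy) hv
  have hu'y : ∀ y ∈ ν₀, ⟪u', y⟫ = 0 := by
    intro y hy
    obtain ⟨h1, h2⟩ := hinner₀ y hy
    rw [hu'def, inner_add_left, real_inner_smul_left, real_inner_smul_left, h1, h2]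
    ring
  set ν' : Submodule ℝ (EuclideanSpace ℝ (Fin n)) := ν₀ ⊔ (ℝ ∙ u') with hν'def
  have hu'ν' : u' ∈ ν' := Submodule.mem_sup_right (Submodule.mem_span_singleton_self u')
  have hνeq : ν = ν₀ ⊔ (ℝ ∙ u) := by
    apply le_antisymm
    · intro x hx
      have h1 : x - ⟪u, x⟫ • u ∈ ν₀ := by
        rw [hν₀def, Submodule.mem_inf]
        refine ⟨ν.sub_mem hx (ν.smul_mem _ hu), ?_⟩
        rw [Submodule.mem_orthogonal_singleton_iff_inner_right, inner_sub_right,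
          real_inner_smul_right, huu]
        ring
      have hd : x = (x - ⟪u, x⟫ • u) + ⟪u, x⟫ • u := by abel
      rw [hd]
      exact Submodule.add_mem _ (Submodule.mem_sup_left h1)
        (Submodule.mem_sup_right (Submodule.smul_mem _ _ (Submodule.mem_span_singleton_self u)))
    · exact sup_le hν₀ν ((Submodule.span_singleton_le_iff_mem _ _).2 hu)
  have huν₀ : u ∉ ν₀ := by
    intro h
    have := (hinner₀ u h).1
    rw [huu] at this; norm_num at this
  have hu'ν₀ : u' ∉ ν₀ := by
    intro h
    have := hu'y u' h
    rw [hu'u'] at this; norm_num at this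
  have hrank : Module.finrank ℝ ν' = Module.finrank ℝ ν := by
    rw [hν'def, finrank_sup_span_aux ν₀ u' hu'ν₀, hνeq, finrank_sup_span_aux ν₀ u huν₀]
  -- The projection formula
  have hproj : ∀ x, projCLM ν' x = projCLM ν x - ⟪u, x⟫ • u + ⟪u', x⟫ • u' := by
    intro x
    have hq : projCLM ν x - ⟪u, x⟫ • u ∈ ν₀ := by
      rw [hν₀def, Submodule.mem_inf]
      refine ⟨ν.sub_mem (orthogonalProjection ν x).2 (ν.smul_mem _ hu), ?_⟩
      rw [Submodule.mem_orthogonal_singleton_iff_inner_right]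
      have hx : ⟪u, x - projCLM ν x⟫ = 0 :=
        Submodule.inner_right_of_mem_orthogonal hu
          (sub_starProjection_mem_orthogonal (K := ν) x)
      rw [inner_sub_right] at hx ⊢
      rw [real_inner_smul_right, huu]
      linarith
    have hmem : projCLM ν x - ⟪u, x⟫ • u + ⟪u', x⟫ • u' ∈ ν' :=
      Submodule.add_mem _ (Submodule.mem_sup_left hq)
        (Submodule.mem_sup_right (Submodule.smul_mem _ _ (Submodule.mem_span_singleton_self u')))
    have horth : x - (projCLM ν x - ⟪u, x⟫ • u + ⟪u', x⟫ • u') ∈ ν'ᗮ := by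
      rw [hν'def, ← Submodule.inf_orthogonal, Submodule.mem_inf]
      constructor
      · intro y hy
        obtain ⟨h1, h2⟩ := hinner₀ y hy
        have h3 : ⟪y, x⟫ - ⟪y, projCLM ν x⟫ = 0 := by
          have h := Submodule.inner_right_of_mem_orthogonal (hν₀ν hy)
            (sub_starProjection_mem_orthogonal (K := ν) x)
          rw [inner_sub_right] at h
          exact h
        have h4 : ⟪y, u⟫ = 0 := by rw [real_inner_comm]; exact h1
        have h5 : ⟪y, u'⟫ = 0 := by rw [real_inner_comm]; exact hu'y y hy
        rw [inner_sub_right, inner_add_right, inner_sub_right, real_inner_smul_right,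
          real_inner_smul_right, h4, h5]
        linarith
      · intro y hy
        rcases Submodule.mem_span_singleton.1 hy with ⟨t, rfl⟩
        have hqu' : ⟪u', projCLM ν x - ⟪u, x⟫ • u⟫ = 0 := hu'y _ hq
        have h6 : ⟪u', x - (projCLM ν x - ⟪u, x⟫ • u + ⟪u', x⟫ • u')⟫ = 0 := by
          rw [inner_sub_right, inner_add_right, hqu', real_inner_smul_right, hu'u']
          ring
        rw [real_inner_smul_left, h6, mul_zero]
    exact eq_starProjection_of_mem_orthogonal (K := ν') hmem horth
  refine ⟨ν', hrank, hu'def ▸ hu'ν', ?_⟩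
  apply ContinuousLinearMap.opNorm_le_bound _ (abs_nonneg s)
  intro x
  have hdiff : (projCLM ν - projCLM ν') x = ⟪u, x⟫ • u - ⟪u', x⟫ • u' := by
    rw [ContinuousLinearMap.sub_apply, hproj x]; abel
  set a : ℝ := ⟪u, x⟫ with ha
  set b : ℝ := ⟪v, x⟫ with hb
  have hu'x : ⟪u', x⟫ = c * a + s * b := by
    rw [hu'def, inner_add_left, real_inner_smul_left, real_inner_smul_left, ha, hb]
  have hsq : ‖a • u - ⟪u', x⟫ • u'‖ ^ 2 = s ^ 2 * (a ^ 2 + b ^ 2) := by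
    rw [← real_inner_self_eq_norm_sq, hu'x, hu'def]
    simp only [inner_sub_left, inner_sub_right, inner_add_left, inner_add_right,
      real_inner_smul_left, real_inner_smul_right, huu, hvv, huv, hvu]
    linear_combination ((a*c+s*b)^2 - a^2) * hcs
  have hbessel : a ^ 2 + b ^ 2 ≤ ‖x‖ ^ 2 := by
    have hxu : ⟪x, u⟫ = a := by rw [real_inner_comm]
    have hxv : ⟪x, v⟫ = b := by rw [real_inner_comm]
    have h0 : (0:ℝ) ≤ ⟪x - (a • u + b • v), x - (a • u + b • v)⟫ :=
      real_inner_self_nonneg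
    have hexp : ⟪x - (a • u + b • v), x - (a • u + b • v)⟫
        = ‖x‖ ^ 2 - (a ^ 2 + b ^ 2) := by
      simp only [inner_sub_left, inner_sub_right, inner_add_left, inner_add_right,
        real_inner_smul_left, real_inner_smul_right, huu, hvv, huv, hvu, hxu, hxv]
      rw [real_inner_self_eq_norm_sq]
      ring
    linarith [hexp ▸ h0]
  rw [hdiff]
  have h1 : ‖a • u - ⟪u', x⟫ • u'‖ ^ 2 ≤ (|s| * ‖x‖) ^ 2 := by
    rw [hsq]
    have h2 : (|s| * ‖x‖) ^ 2 = s ^ 2 * ‖x‖ ^ 2 := by rw [mul_pow, sq_abs]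
    rw [h2]
    exact mul_le_mul_of_nonneg_left hbessel (sq_nonneg s)
  nlinarith [norm_nonneg (a • u - ⟪u', x⟫ • u'), mul_nonneg (abs_nonneg s) (norm_nonneg x)]

set_option maxHeartbeats 2000000 in
theorem stmt12 {n l : ℕ} (ν : Submodule ℝ (EuclideanSpace ℝ (Fin n)))
    (hν : Module.finrank ℝ ν = l) (d : ℝ) (hd : 0 < d)
    (z : EuclideanSpace ℝ (Fin n)) (hz : z ∈ ν) (hz0 : z ≠ 0)
    (η : EuclideanSpace ℝ (Fin n)) (hη : ‖η‖ < d * ‖z‖) :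
    ∃ ν' : Submodule ℝ (EuclideanSpace ℝ (Fin n)),
      Module.finrank ℝ ν' = l ∧ z + η ∈ ν' ∧ ‖projCLM ν - projCLM ν'‖ < d := by
  have hzpos : (0:ℝ) < ‖z‖ := norm_pos_iff.2 hz0
  set η₁ : EuclideanSpace ℝ (Fin n) := projCLM ν η with hη₁def
  set η₂ : EuclideanSpace ℝ (Fin n) := η - η₁ with hη₂def
  have hη₁ν : η₁ ∈ ν := (orthogonalProjection ν η).2
  have hη₂o : η₂ ∈ νᗮ := sub_starProjection_mem_orthogonal (K := ν) η
  have hsum : η = η₁ + η₂ := by rw [hη₂def]; abel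
  by_cases h2 : η₂ = 0
  · refine ⟨ν, hν, ?_, ?_⟩
    · have hηe : η = η₁ := by rw [hsum, h2, add_zero]
      exact ν.add_mem hz (hηe ▸ hη₁ν)
    · rw [sub_self, norm_zero]; exact hd
  · have hη₂pos : 0 < ‖η₂‖ := norm_pos_iff.2 h2
    set w : EuclideanSpace ℝ (Fin n) := z + η₁ with hwdef
    have hwν : w ∈ ν := ν.add_mem hz hη₁ν
    set r : ℝ := Real.sqrt (‖w‖^2 + ‖η₂‖^2) with hrdef
    have hrpos : 0 < r := Real.sqrt_pos.2 (by positivity)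
    have hr2 : r^2 = ‖w‖^2 + ‖η₂‖^2 := Real.sq_sqrt (by positivity)
    set v : EuclideanSpace ℝ (Fin n) := ‖η₂‖⁻¹ • η₂ with hvdef
    have hvν : v ∈ νᗮ := Submodule.smul_mem _ _ hη₂o
    have hv1 : ‖v‖ = 1 := by
      rw [hvdef, norm_smul, norm_inv, norm_norm, inv_mul_cancel₀ hη₂pos.ne']
    set c : ℝ := ‖w‖ / r with hcdef
    set s : ℝ := ‖η₂‖ / r with hsdef
    have hcs : c^2 + s^2 = 1 := by
      rw [hcdef, hsdef]
      field_simp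
      linarith [hr2]
    have hzw : z + η = w + η₂ := by rw [hwdef, hsum]; abel
    -- Pythagoras and the main arithmetic inequality
    have hP : ‖η‖^2 = ‖η₁‖^2 + ‖η₂‖^2 := by
      have ho : ⟪η₁, η₂⟫ = 0 := Submodule.inner_right_of_mem_orthogonal hη₁ν hη₂o
      rw [hsum, @norm_add_sq_real, ho]
      ring
    have hlt2 : ‖η‖^2 < d^2 * ‖z‖^2 := by
      have := pow_lt_pow_left₀ hη (norm_nonneg η) (n := 2) (by norm_num)
      nlinarith
    have htri : ‖z‖ ≤ ‖w‖ + ‖η₁‖ := by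
      have hze : z = w - η₁ := by rw [hwdef]; abel
      calc ‖z‖ = ‖w - η₁‖ := by rw [← hze]
        _ ≤ ‖w‖ + ‖η₁‖ := norm_sub_le _ _
    have ht : ‖η₁‖ ≤ ‖η‖ := by
      have h1 : ‖η₁‖^2 ≤ ‖η‖^2 := by rw [hP]; nlinarith [sq_nonneg ‖η₂‖]
      have h2 := Real.sqrt_le_sqrt h1
      rwa [Real.sqrt_sq (norm_nonneg _), Real.sqrt_sq (norm_nonneg _)] at h2
    have hkey : ‖η₂‖^2 < d^2 * (‖w‖^2 + ‖η₂‖^2) := by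
      rcases lt_trichotomy d 1 with hd1 | hd1 | hd1
      · have hta : ‖η₁‖ < ‖z‖ := by nlinarith
        have hW : 0 < ‖w‖ := by linarith
        have hWat : (‖z‖ - ‖η₁‖)^2 ≤ ‖w‖^2 := by nlinarith
        have k1 : 0 ≤ d^2 * (‖w‖^2 - (‖z‖ - ‖η₁‖)^2) :=
          mul_nonneg (sq_nonneg d) (by linarith)
        have k2 : 0 < (1 - d^2) * (d^2*‖z‖^2 - ‖η₁‖^2 - ‖η₂‖^2) := by
          apply mul_pos (by nlinarith) (by nlinarith)
        nlinarith [sq_nonneg (‖η₁‖ - d^2*‖z‖)]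
      · subst hd1
        have hta : ‖η₁‖ < ‖z‖ := by nlinarith
        have hW : 0 < ‖w‖ := by linarith
        nlinarith
      · have hd2 : 1 < d^2 := by nlinarith
        nlinarith [mul_nonneg (sq_nonneg d) (sq_nonneg ‖w‖),
          mul_pos (show (0:ℝ) < d^2 - 1 by linarith)
            (show (0:ℝ) < ‖η₂‖^2 by positivity)]
    have hεr : ‖η₂‖ < d * r := by
      have hsq : ‖η₂‖^2 < (d*r)^2 := by rw [mul_pow, hr2]; exact hkey
      nlinarith [hsq, mul_pos hd hrpos, norm_nonneg η₂]
    have hsd : s < d := by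
      rw [hsdef, div_lt_iff₀ hrpos]
      exact hεr
    have hs0 : 0 ≤ s := div_nonneg (norm_nonneg _) hrpos.le
    -- construct the unit vector u ∈ ν
    by_cases hw : w = 0
    · -- here c = 0 and z + η = η₂
      have hw0 : ‖w‖ = 0 := by rw [hw, norm_zero]
      set u : EuclideanSpace ℝ (Fin n) := ‖z‖⁻¹ • z with hudef
      have huν : u ∈ ν := Submodule.smul_mem _ _ hz
      have hu1 : ‖u‖ = 1 := by
        rw [hudef, norm_smul, norm_inv, norm_norm, inv_mul_cancel₀ hzpos.ne']
      obtain ⟨ν', hr', hmem', hnorm'⟩ := key_rotate ν u v huν hvν hu1 hv1 c s hcs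
      have hcu : c • u + s • v = r⁻¹ • (z + η) := by
        have hc0 : c = 0 := by rw [hcdef, hw0, zero_div]
        rw [hc0, zero_smul, zero_add, hzw, hw, zero_add, hsdef, hvdef, smul_smul]
        congr 1
        field_simp
      refine ⟨ν', hr'.trans hν, ?_, ?_⟩
      · have hze : z + η = r • (c • u + s • v) := by
          rw [hcu, smul_smul, mul_inv_cancel₀ hrpos.ne', one_smul]
        rw [hze]
        exact Submodule.smul_mem _ _ hmem'
      · calc ‖projCLM ν - projCLM ν'‖ ≤ |s| := hnorm'
          _ = s := abs_of_nonneg hs0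
          _ < d := hsd
    · have hWpos : 0 < ‖w‖ := norm_pos_iff.2 hw
      set u : EuclideanSpace ℝ (Fin n) := ‖w‖⁻¹ • w with hudef
      have huν : u ∈ ν := Submodule.smul_mem _ _ hwν
      have hu1 : ‖u‖ = 1 := by
        rw [hudef, norm_smul, norm_inv, norm_norm, inv_mul_cancel₀ hWpos.ne']
      obtain ⟨ν', hr', hmem', hnorm'⟩ := key_rotate ν u v huν hvν hu1 hv1 c s hcs
      have hcu : c • u + s • v = r⁻¹ • (z + η) := by
        have ha : c • u = r⁻¹ • w := by
          rw [hcdef, hudef, smul_smul]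
          congr 1
          field_simp
        have hb : s • v = r⁻¹ • η₂ := by
          rw [hsdef, hvdef, smul_smul]
          congr 1
          field_simp
        rw [hzw, ha, hb, smul_add, hwdef, smul_add]
        module
      refine ⟨ν', hr'.trans hν, ?_, ?_⟩
      · have hze : z + η = r • (c • u + s • v) := by
          rw [hcu, smul_smul, mul_inv_cancel₀ hrpos.ne', one_smul]
        rw [hze]
        exact Submodule.smul_mem _ _ hmem'
      · calc ‖projCLM ν - projCLM ν'‖ ≤ |s| := hnorm'
          _ = s := abs_of_nonneg hs0
          _ < d := hsd
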